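/- Let (X, σ) be a minimal subshift, m as in the disjointness lemma (m ≥ max{(R_x(4)−1)/2, 5}), and U an m-cylinder of X such that σ^i(U), −2 ≤ i ≤ 2, are pairwise disjoint. Then the subgroup Δ_U = ⟨f_{σ^{−1}(U)}, f_U, f_{σ(U)}⟩ of ⟦σ⟧′ is isomorphic to the alternating group Alt(5), and every element of Δ_U is supported on the union of σ^i(U) for −2 ≤ i ≤ 2. -/

import Mathlib

/-- The set of `n`-factors of a two-sided infinite word `w`. -/
def factorsZ {A : Type*} (w : ℤ → A) (n : ℕ) : Set (Fin n → A) :=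
  {u | ∃ k : ℤ, ∀ i : Fin n, u i = w (k + (i : ℤ))}

/-- The complexity function of a two-sided infinite word. -/
noncomputable def complexityZ {A : Type*} (w : ℤ → A) (n : ℕ) : ℕ :=
  Nat.card (factorsZ w n)

/-- `u` occurs in the length-`M` window of `w` starting at `k`. -/
def OccursIn {A : Type*} (w : ℤ → A) {n : ℕ} (u : Fin n → A) (k : ℤ) (M : ℕ) : Prop :=
  ∃ j : ℤ, k ≤ j ∧ j + (n : ℤ) ≤ k + (M : ℤ) ∧ ∀ i : Fin n, u i = w (j + (i : ℤ))

/-- `M` is a recurrence bound for length-`n` factors of `w`. -/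
def IsRecurrenceBound {A : Type*} (w : ℤ → A) (n M : ℕ) : Prop :=
  ∀ u ∈ factorsZ w n, ∀ k : ℤ, OccursIn w u k M

def UniformlyRecurrent {A : Type*} (w : ℤ → A) : Prop :=
  ∀ n : ℕ, ∃ M : ℕ, IsRecurrenceBound w n M

/-- The recurrence function of `w`. -/
noncomputable def recurrenceFn {A : Type*} (w : ℤ → A) (n : ℕ) : ℕ :=
  sInf {M | IsRecurrenceBound w n M}

def PeriodicWord {A : Type*} (w : ℤ → A) : Prop :=
  ∃ k : ℤ, 1 ≤ k ∧ ∀ i : ℤ, w (i + k) = w i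

/-- The `i`-th power of the shift: `(shiftFun i y) t = y (t + i)`. -/
def shiftFun {A : Type*} (i : ℤ) (y : ℤ → A) : ℤ → A := fun t => y (t + i)

/-- Image of a set of words under the `i`-th power of the shift. -/
def shiftSet {A : Type*} (i : ℤ) (W : Set (ℤ → A)) : Set (ℤ → A) := shiftFun i '' W

def cylC {A : Type*} (m : ℕ) (u : Fin (2 * m + 1) → A) : Set (ℤ → A) :=
  {y | ∀ i : Fin (2 * m + 1), y ((i : ℤ) - (m : ℤ)) = u i}

def IsMCylinder {A : Type*} (X : Set (ℤ → A)) (m : ℕ) (U : Set (ℤ → A)) : Prop :=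
  (∃ u : Fin (2 * m + 1) → A, U = X ∩ cylC m u) ∧ U.Nonempty
/-- The group of self-homeomorphisms of a space, under composition
(`(g * h) x = g (h x)`). -/
instance homeomorphGroup {Y : Type*} [TopologicalSpace Y] : Group (Y ≃ₜ Y) where
  mul g h := h.trans g
  one := Homeomorph.refl Y
  inv := Homeomorph.symm
  mul_assoc _ _ _ := Homeomorph.ext fun _ => rfl
  one_mul _ := Homeomorph.ext fun _ => rfl
  mul_one _ := Homeomorph.ext fun _ => rfl
  inv_mul_cancel g := Homeomorph.ext fun y => g.symm_apply_apply y

def InFullGroup {A : Type*} [TopologicalSpace A] (X : Set (ℤ → A)) (g : ↥X ≃ₜ ↥X) : Prop :=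
  ∃ f : ↥X → ℤ, Continuous f ∧ ∀ p : ↥X, ((g p : ℤ → A)) = shiftFun (f p) (p : ℤ → A)

/-- `g` is the homeomorphism `f_W`: it acts as `σ` on `W ∪ σ⁻¹(W)`, as `σ⁻²` on `σ(W)`,
and as the identity elsewhere. -/
def IsFOn {A : Type*} [TopologicalSpace A] (X W : Set (ℤ → A)) (g : ↥X ≃ₜ ↥X) : Prop :=
  ∀ p : ↥X,
    ((p : ℤ → A) ∈ W ∪ shiftSet (-1) W → ((g p : ℤ → A)) = shiftFun 1 (p : ℤ → A)) ∧
    ((p : ℤ → A) ∈ shiftSet 1 W → ((g p : ℤ → A)) = shiftFun (-2) (p : ℤ → A)) ∧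
    ((p : ℤ → A) ∉ W ∪ shiftSet (-1) W ∪ shiftSet 1 W → g p = p)

section ShiftAux
variable {A : Type*}

lemma shiftFun_shiftFun (a b : ℤ) (y : ℤ → A) :
    shiftFun a (shiftFun b y) = shiftFun (a + b) y := by
  funext t; simp [shiftFun, add_assoc]

lemma shiftFun_zero' (y : ℤ → A) : shiftFun 0 y = y := by
  funext t; simp [shiftFun]

lemma shiftSet_shiftSet (a b : ℤ) (W : Set (ℤ → A)) :
    shiftSet a (shiftSet b W) = shiftSet (a + b) W := by
  simp only [shiftSet, ← Set.image_comp]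
  exact Set.image_congr' (fun y => shiftFun_shiftFun a b y)

lemma shiftSet_zero' (W : Set (ℤ → A)) : shiftSet 0 W = W := by
  have h : shiftFun (0 : ℤ) = (id : (ℤ → A) → (ℤ → A)) := funext shiftFun_zero'
  simp [shiftSet, h]

lemma continuous_shiftFun [TopologicalSpace A] (i : ℤ) :
    Continuous (shiftFun i : (ℤ → A) → (ℤ → A)) :=
  continuous_pi fun t => continuous_apply (t + i)

lemma shift_mem_orbitClosure [TopologicalSpace A] {x : ℤ → A} {y : ℤ → A}
    (hy : y ∈ closure (Set.range fun n : ℤ => shiftFun n x)) (i : ℤ) :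
    shiftFun i y ∈ closure (Set.range fun n : ℤ => shiftFun n x) := by
  refine map_mem_closure (continuous_shiftFun i) hy ?_
  rintro z ⟨n, rfl⟩
  exact ⟨n + i, by rw [shiftFun_shiftFun, add_comm]⟩

end ShiftAux

section HomeoAux
variable {Y : Type*} [TopologicalSpace Y]

lemma hmul_apply (g h : Y ≃ₜ Y) (p : Y) : (g * h) p = g (h p) := rfl
lemma hinv_apply (g : Y ≃ₜ Y) (p : Y) : (g⁻¹) p = g.symm p := rfl
lemma hone_apply (p : Y) : (1 : Y ≃ₜ Y) p = p := rfl

end HomeoAux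

/-- The level of an index `i : Fin 5`, an integer in `[-2, 2]`. -/
def lvl (i : Fin 5) : ℤ := (i : ℤ) - 2

/-- `g` acts on the five levels `σ^(lvl i)(U)` by the permutation `π`, shifting accordingly,
and fixes everything outside of the levels. -/
def Pprop {A : Type*} [TopologicalSpace A] (X U : Set (ℤ → A)) (g : ↥X ≃ₜ ↥X)
    (π : Equiv.Perm (Fin 5)) : Prop :=
  (∀ (i : Fin 5) (p : ↥X), (p : ℤ → A) ∈ shiftSet (lvl i) U →
      ((g p : ℤ → A)) = shiftFun (lvl (π i) - lvl i) (p : ℤ → A)) ∧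
  (∀ p : ↥X, (∀ i : Fin 5, (p : ℤ → A) ∉ shiftSet (lvl i) U) → g p = p)

section PpropAux
variable {A : Type*} [TopologicalSpace A] {X U : Set (ℤ → A)}

lemma P_mapsLevel {g : ↥X ≃ₜ ↥X} {π : Equiv.Perm (Fin 5)} (hP : Pprop X U g π)
    {i : Fin 5} {p : ↥X} (hp : (p : ℤ → A) ∈ shiftSet (lvl i) U) :
    ((g p : ℤ → A)) ∈ shiftSet (lvl (π i)) U := by
  obtain ⟨u, hu, hpu⟩ := hp
  refine ⟨u, hu, ?_⟩
  rw [hP.1 i p ⟨u, hu, hpu⟩, ← hpu, shiftFun_shiftFun]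
  ring_nf

lemma P_one : Pprop X U (1 : ↥X ≃ₜ ↥X) 1 := by
  constructor
  · intro i p _
    rw [hone_apply]
    simp [shiftFun_zero']
  · intro p _
    rfl

lemma P_mul {g h : ↥X ≃ₜ ↥X} {π τ : Equiv.Perm (Fin 5)}
    (hg : Pprop X U g π) (hh : Pprop X U h τ) : Pprop X U (g * h) (π * τ) := by
  constructor
  · intro i p hp
    have h1 := hh.1 i p hp
    have h2 : ((h p : ℤ → A)) ∈ shiftSet (lvl (τ i)) U := P_mapsLevel hh hp
    have h3 := hg.1 (τ i) (h p) h2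
    rw [hmul_apply, h3, h1, shiftFun_shiftFun]
    simp only [Equiv.Perm.mul_apply]
    ring_nf
  · intro p hp
    rw [hmul_apply, hh.2 p hp, hg.2 p hp]

/-- The word of a point belongs to at most one level. -/
def LevelsDisjoint (U : Set (ℤ → A)) : Prop :=
  ∀ (w : ℤ → A) (i j : Fin 5), w ∈ shiftSet (lvl i) U → w ∈ shiftSet (lvl j) U → i = j

lemma P_inv (hdU : LevelsDisjoint U) {g : ↥X ≃ₜ ↥X} {π : Equiv.Perm (Fin 5)}
    (hg : Pprop X U g π) : Pprop X U g⁻¹ (π⁻¹) := by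
  constructor
  · intro i p hp
    have hgq : g (g⁻¹ p) = p := g.apply_symm_apply p
    by_cases hcase : ∃ j : Fin 5, ((g⁻¹ p : ↥X) : ℤ → A) ∈ shiftSet (lvl j) U
    · obtain ⟨j, hj⟩ := hcase
      have h2 : ((g (g⁻¹ p) : ℤ → A)) ∈ shiftSet (lvl (π j)) U := P_mapsLevel hg hj
      rw [hgq] at h2
      have hij : π j = i := hdU _ _ _ h2 hp
      have h1 := hg.1 j (g⁻¹ p) hj
      rw [hgq] at h1
      have hj' : π⁻¹ i = j := by rw [← hij]; exact π.symm_apply_apply j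
      rw [hj', h1, shiftFun_shiftFun, hij]
      have h0 : lvl j - lvl i + (lvl i - lvl j) = 0 := by ring
      rw [h0, shiftFun_zero']
    · push_neg at hcase
      have h0 : g (g⁻¹ p) = g⁻¹ p := hg.2 (g⁻¹ p) hcase
      rw [hgq] at h0
      exfalso
      exact hcase i (by rw [← h0]; exact hp)
  · intro p hp
    by_cases hcase : ∃ j : Fin 5, ((g⁻¹ p : ↥X) : ℤ → A) ∈ shiftSet (lvl j) U
    · obtain ⟨j, hj⟩ := hcase
      have hgq : g (g⁻¹ p) = p := g.apply_symm_apply p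
      have h2 : ((g (g⁻¹ p) : ℤ → A)) ∈ shiftSet (lvl (π j)) U := P_mapsLevel hg hj
      rw [hgq] at h2
      exact absurd h2 (hp _)
    · push_neg at hcase
      have hgq : g (g⁻¹ p) = p := g.apply_symm_apply p
      have h0 : g (g⁻¹ p) = g⁻¹ p := hg.2 (g⁻¹ p) hcase
      rw [hgq] at h0
      exact h0.symm

lemma P_unique (hdU : LevelsDisjoint U) (hne : U.Nonempty)
    (hsub : ∀ i : Fin 5, shiftSet (lvl i) U ⊆ X)
    {g : ↥X ≃ₜ ↥X} {π π' : Equiv.Perm (Fin 5)}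
    (h1 : Pprop X U g π) (h2 : Pprop X U g π') : π = π' := by
  apply Equiv.ext
  intro i
  obtain ⟨u, hu⟩ := hne
  have hmem : shiftFun (lvl i) u ∈ shiftSet (lvl i) U := ⟨u, hu, rfl⟩
  set p : ↥X := ⟨shiftFun (lvl i) u, hsub i hmem⟩ with hpdef
  have hp : (p : ℤ → A) ∈ shiftSet (lvl i) U := hmem
  exact hdU _ _ _ (P_mapsLevel h1 hp) (P_mapsLevel h2 hp)

lemma P_faithful {g g' : ↥X ≃ₜ ↥X} {π : Equiv.Perm (Fin 5)}
    (h1 : Pprop X U g π) (h2 : Pprop X U g' π) : g = g' := by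
  apply Homeomorph.ext
  intro p
  by_cases hcase : ∃ i : Fin 5, (p : ℤ → A) ∈ shiftSet (lvl i) U
  · obtain ⟨i, hi⟩ := hcase
    apply Subtype.ext
    rw [h1.1 i p hi, h2.1 i p hi]
  · push_neg at hcase
    rw [h1.2 p hcase, h2.2 p hcase]

end PpropAux

/-- The 3-cycle `(a b c)`. -/
def c3 (a b c : Fin 5) : Equiv.Perm (Fin 5) := Equiv.swap a b * Equiv.swap b c

section C3
variable {a b c : Fin 5}

lemma c3_apply_a (hab : a ≠ b) (hac : a ≠ c) : c3 a b c a = b := by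
  simp [c3, Equiv.Perm.mul_apply, Equiv.swap_apply_of_ne_of_ne hab hac,
    Equiv.swap_apply_left]

lemma c3_apply_b (hcb : c ≠ b) (hca : c ≠ a) : c3 a b c b = c := by
  simp [c3, Equiv.Perm.mul_apply, Equiv.swap_apply_left,
    Equiv.swap_apply_of_ne_of_ne hca hcb]

lemma c3_apply_c : c3 a b c c = a := by
  simp [c3, Equiv.Perm.mul_apply, Equiv.swap_apply_right]

lemma c3_apply_other {i : Fin 5} (hia : i ≠ a) (hib : i ≠ b) (hic : i ≠ c) :
    c3 a b c i = i := by
  simp [c3, Equiv.Perm.mul_apply, Equiv.swap_apply_of_ne_of_ne hib hic,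
    Equiv.swap_apply_of_ne_of_ne hia hib]

end C3

lemma P_fW {A : Type*} [TopologicalSpace A] {X U : Set (ℤ → A)}
    (hdU : LevelsDisjoint U) {a b c : Fin 5}
    (hab : (b : ℤ) = (a : ℤ) + 1) (hbc : (c : ℤ) = (b : ℤ) + 1)
    {g : ↥X ≃ₜ ↥X} (hg : IsFOn X (shiftSet (lvl b) U) g) :
    Pprop X U g (c3 a b c) := by
  have hWm : shiftSet (-1) (shiftSet (lvl b) U) = shiftSet (lvl a) U := by
    rw [shiftSet_shiftSet]
    have he : (-1 : ℤ) + lvl b = lvl a := by simp only [lvl]; omega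
    rw [he]
  have hWp : shiftSet 1 (shiftSet (lvl b) U) = shiftSet (lvl c) U := by
    rw [shiftSet_shiftSet]
    have he : (1 : ℤ) + lvl b = lvl c := by simp only [lvl]; omega
    rw [he]
  have hneab : a ≠ b := by intro h; rw [h] at hab; omega
  have hnebc : b ≠ c := by intro h; rw [h] at hbc; omega
  have hneac : a ≠ c := by intro h; rw [← h] at hbc; omega
  have hnotin : ∀ (p : ↥X) (i : Fin 5), (p : ℤ → A) ∈ shiftSet (lvl i) U → ∀ j : Fin 5,
      i ≠ j → (p : ℤ → A) ∉ shiftSet (lvl j) U := by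
    intro p i hpi j hij hpj
    exact hij (hdU _ _ _ hpi hpj)
  constructor
  · intro i p hp
    by_cases hia : i = a
    · rw [hia] at hp ⊢
      have hmem : (p : ℤ → A) ∈ shiftSet (lvl b) U ∪ shiftSet (-1) (shiftSet (lvl b) U) := by
        rw [hWm]; exact Or.inr hp
      rw [(hg p).1 hmem, c3_apply_a hneab hneac]
      have he : (1 : ℤ) = lvl b - lvl a := by simp only [lvl]; omega
      rw [he]
    by_cases hib : i = b
    · rw [hib] at hp ⊢
      have hmem : (p : ℤ → A) ∈ shiftSet (lvl b) U ∪ shiftSet (-1) (shiftSet (lvl b) U) :=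
        Or.inl hp
      rw [(hg p).1 hmem, c3_apply_b hnebc.symm hneac.symm]
      have he : (1 : ℤ) = lvl c - lvl b := by simp only [lvl]; omega
      rw [he]
    by_cases hic : i = c
    · rw [hic] at hp ⊢
      have hmem : (p : ℤ → A) ∈ shiftSet 1 (shiftSet (lvl b) U) := by
        rw [hWp]; exact hp
      rw [(hg p).2.1 hmem, c3_apply_c]
      have he : (-2 : ℤ) = lvl a - lvl c := by simp only [lvl]; omega
      rw [he]
    · have hmem : (p : ℤ → A) ∉ shiftSet (lvl b) U ∪ shiftSet (-1) (shiftSet (lvl b) U) ∪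
          shiftSet 1 (shiftSet (lvl b) U) := by
        rw [hWm, hWp]
        rintro ((h | h) | h)
        · exact hnotin p i hp b hib h
        · exact hnotin p i hp a hia h
        · exact hnotin p i hp c hic h
      rw [(hg p).2.2 hmem, c3_apply_other hia hib hic]
      have h0 : lvl i - lvl i = 0 := by ring
      rw [h0, shiftFun_zero']
  · intro p hp
    apply (hg p).2.2
    rw [hWm, hWp]
    rintro ((h | h) | h)
    · exact hp b h
    · exact hp a h
    · exact hp c h

set_option maxRecDepth 8000 in
lemma closure_c3_eq_alternating :
    Subgroup.closure {c3 0 1 2, c3 1 2 3, c3 2 3 4} = alternatingGroup (Fin 5) := by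
  classical
  set R := Subgroup.closure {c3 0 1 2, c3 1 2 3, c3 2 3 4} with hR
  have hmem1 : c3 0 1 2 ∈ R := Subgroup.subset_closure (by simp)
  have hmem2 : c3 1 2 3 ∈ R := Subgroup.subset_closure (by simp)
  have hmem3 : c3 2 3 4 ∈ R := Subgroup.subset_closure (by simp)
  have hle : R ≤ alternatingGroup (Fin 5) := by
    rw [hR, Subgroup.closure_le]
    rintro π (rfl | rfl | rfl) <;>
      exact Equiv.Perm.mem_alternatingGroup.mpr (by decide)
  have h3 : (3 : ℕ) ∣ Nat.card R := by
    haveI : Fact (Nat.Prime 3) := ⟨by norm_num⟩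
    have h := Subgroup.orderOf_dvd_natCard R hmem1
    rwa [orderOf_eq_prime (p := 3) (by decide) (by decide)] at h
  have h5 : (5 : ℕ) ∣ Nat.card R := by
    haveI : Fact (Nat.Prime 5) := ⟨by norm_num⟩
    have h := Subgroup.orderOf_dvd_natCard R (mul_mem hmem1 hmem3)
    rwa [orderOf_eq_prime (p := 5) (by decide) (by decide)] at h
  have h4 : (4 : ℕ) ∣ Nat.card R := by
    have hmulF : ∀ u ∈ ({1, c3 0 1 2 * c3 1 2 3, c3 1 2 3 * c3 0 1 2,
        (c3 0 1 2 * c3 1 2 3) * (c3 1 2 3 * c3 0 1 2)} : Finset (Equiv.Perm (Fin 5))),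
        ∀ v ∈ ({1, c3 0 1 2 * c3 1 2 3, c3 1 2 3 * c3 0 1 2,
        (c3 0 1 2 * c3 1 2 3) * (c3 1 2 3 * c3 0 1 2)} : Finset (Equiv.Perm (Fin 5))),
        u * v ∈ ({1, c3 0 1 2 * c3 1 2 3, c3 1 2 3 * c3 0 1 2,
        (c3 0 1 2 * c3 1 2 3) * (c3 1 2 3 * c3 0 1 2)} : Finset (Equiv.Perm (Fin 5))) := by
      decide
    have hinvF : ∀ u ∈ ({1, c3 0 1 2 * c3 1 2 3, c3 1 2 3 * c3 0 1 2,
        (c3 0 1 2 * c3 1 2 3) * (c3 1 2 3 * c3 0 1 2)} : Finset (Equiv.Perm (Fin 5))),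
        u⁻¹ ∈ ({1, c3 0 1 2 * c3 1 2 3, c3 1 2 3 * c3 0 1 2,
        (c3 0 1 2 * c3 1 2 3) * (c3 1 2 3 * c3 0 1 2)} : Finset (Equiv.Perm (Fin 5))) := by
      decide
    have honeF : (1 : Equiv.Perm (Fin 5)) ∈ ({1, c3 0 1 2 * c3 1 2 3, c3 1 2 3 * c3 0 1 2,
        (c3 0 1 2 * c3 1 2 3) * (c3 1 2 3 * c3 0 1 2)} : Finset (Equiv.Perm (Fin 5))) := by
      decide
    let V : Subgroup (Equiv.Perm (Fin 5)) :=
      { carrier := ↑({1, c3 0 1 2 * c3 1 2 3, c3 1 2 3 * c3 0 1 2,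
          (c3 0 1 2 * c3 1 2 3) * (c3 1 2 3 * c3 0 1 2)} : Finset (Equiv.Perm (Fin 5)))
        one_mem' := Finset.mem_coe.mpr honeF
        mul_mem' := fun hx hy => Finset.mem_coe.mpr
          (hmulF _ (Finset.mem_coe.mp hx) _ (Finset.mem_coe.mp hy))
        inv_mem' := fun hx => Finset.mem_coe.mpr (hinvF _ (Finset.mem_coe.mp hx)) }
    have hVle : V ≤ R := by
      intro y hy
      have hy' : y = 1 ∨ y = c3 0 1 2 * c3 1 2 3 ∨ y = c3 1 2 3 * c3 0 1 2 ∨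
          y = (c3 0 1 2 * c3 1 2 3) * (c3 1 2 3 * c3 0 1 2) := by
        simpa [V, Finset.mem_insert, Finset.mem_singleton] using hy
      rcases hy' with rfl | rfl | rfl | rfl
      · exact one_mem R
      · exact mul_mem hmem1 hmem2
      · exact mul_mem hmem2 hmem1
      · exact mul_mem (mul_mem hmem1 hmem2) (mul_mem hmem2 hmem1)
    have hcardV : Nat.card V = 4 := by
      have h1 : Nat.card V = ((↑({1, c3 0 1 2 * c3 1 2 3, c3 1 2 3 * c3 0 1 2,
          (c3 0 1 2 * c3 1 2 3) * (c3 1 2 3 * c3 0 1 2)} : Finset (Equiv.Perm (Fin 5)))) :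
          Set (Equiv.Perm (Fin 5))).ncard := by
        rw [← Nat.card_coe_set_eq]
        rfl
      rw [h1, Set.ncard_coe_finset]
      decide
    exact hcardV ▸ Subgroup.card_dvd_of_le hVle
  have h60 : (60 : ℕ) ∣ Nat.card R := by
    have h12 : (12 : ℕ) ∣ Nat.card R := by
      have h := (by norm_num : Nat.Coprime 3 4).mul_dvd_of_dvd_of_dvd h3 h4
      exact (by norm_num : (12 : ℕ) = 3 * 4) ▸ h
    have h := (by norm_num : Nat.Coprime 12 5).mul_dvd_of_dvd_of_dvd h12 h5
    exact (by norm_num : (60 : ℕ) = 12 * 5) ▸ h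
  have hcardA : Nat.card (alternatingGroup (Fin 5)) = 60 := by
    have h2 := two_mul_card_alternatingGroup (α := Fin 5)
    have h120 : Fintype.card (Equiv.Perm (Fin 5)) = 120 := by
      rw [Fintype.card_perm]; decide
    rw [Nat.card_eq_fintype_card]
    omega
  have hdvd : Nat.card R ∣ 60 := hcardA ▸ Subgroup.card_dvd_of_le hle
  have hcardR : Nat.card R = 60 := Nat.dvd_antisymm hdvd h60
  apply SetLike.coe_injective
  apply Set.eq_of_subset_of_ncard_le hle _ (Set.toFinite _)
  rw [← Nat.card_coe_set_eq, ← Nat.card_coe_set_eq]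
  show Nat.card (alternatingGroup (Fin 5)) ≤ Nat.card R
  rw [hcardA, hcardR]

/-- for an `m`-cylinder `U` (with `m ≥ max{(R_x(4)−1)/2, 5}`) whose five
shifts `σ^i(U)`, `−2 ≤ i ≤ 2`, are pairwise disjoint, the subgroup
`Δ_U = ⟨f_{σ⁻¹(U)}, f_U, f_{σ(U)}⟩` is isomorphic to `Alt(5)`, and each of its elements is
supported on `⋃_{−2 ≤ i ≤ 2} σ^i(U)`. -/

theorem stmt16 {A : Type*} [Fintype A] [TopologicalSpace A] [DiscreteTopology A]
    (x : ℤ → A) (hUR : UniformlyRecurrent x) (hNP : ¬ PeriodicWord x)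
    (X : Set (ℤ → A)) (hX : X = closure (Set.range fun n : ℤ => shiftFun n x))
    (m : ℕ) (hm5 : 5 ≤ m) (hmR : recurrenceFn x 4 ≤ 2 * m + 1)
    (U : Set (ℤ → A)) (hU : IsMCylinder X m U)
    (hdisj : ∀ i j : ℤ, -2 ≤ i → i ≤ 2 → -2 ≤ j → j ≤ 2 → i ≠ j →
      Disjoint (shiftSet i U) (shiftSet j U))
    (gm g0 gp : ↥X ≃ₜ ↥X)
    (hgm : IsFOn X (shiftSet (-1) U) gm) (hg0 : IsFOn X U g0)
    (hgp : IsFOn X (shiftSet 1 U) gp) :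
    Nonempty (↥(Subgroup.closure {gm, g0, gp}) ≃* ↥(alternatingGroup (Fin 5))) ∧
    (∀ g ∈ Subgroup.closure {gm, g0, gp}, ∀ p : ↥X, g p ≠ p →
      ∃ i : ℤ, -2 ≤ i ∧ i ≤ 2 ∧ (p : ℤ → A) ∈ shiftSet i U) := by
  classical
  -- Basic facts about `U` and the levels
  have hUX : U ⊆ X := by
    obtain ⟨⟨u, hu⟩, -⟩ := hU
    rw [hu]
    exact Set.inter_subset_left
  have hsubl : ∀ i : Fin 5, shiftSet (lvl i) U ⊆ X := by
    rintro i _ ⟨u, hu, rfl⟩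
    rw [hX]
    exact shift_mem_orbitClosure (hX ▸ hUX hu) (lvl i)
  have hlb : ∀ i : Fin 5, -2 ≤ lvl i ∧ lvl i ≤ 2 := by
    intro i
    have := i.isLt
    simp only [lvl]
    omega
  have hdU : LevelsDisjoint U := by
    intro w i j h1 h2
    by_contra hne
    have hlne : lvl i ≠ lvl j := by
      simp only [lvl]
      intro h
      exact hne (Fin.ext (by omega))
    exact Set.disjoint_left.mp
      (hdisj _ _ (hlb i).1 (hlb i).2 (hlb j).1 (hlb j).2 hlne) h1 h2
  -- The generators satisfy `Pprop` with the three adjacent 3-cycles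
  have hPgm : Pprop X U gm (c3 0 1 2) := by
    refine P_fW hdU (by decide) (by decide) ?_
    have h1 : lvl (1 : Fin 5) = (-1 : ℤ) := by decide
    rw [h1]
    exact hgm
  have hPg0 : Pprop X U g0 (c3 1 2 3) := by
    refine P_fW hdU (by decide) (by decide) ?_
    have h2 : lvl (2 : Fin 5) = (0 : ℤ) := by decide
    rw [h2, shiftSet_zero']
    exact hg0
  have hPgp : Pprop X U gp (c3 2 3 4) := by
    refine P_fW hdU (by decide) (by decide) ?_
    have h3 : lvl (3 : Fin 5) = (1 : ℤ) := by decide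
    rw [h3]
    exact hgp
  -- Every element of the closure satisfies `Pprop` for some permutation
  have hexP : ∀ g ∈ Subgroup.closure {gm, g0, gp}, ∃ π, Pprop X U g π := by
    intro g hg
    refine Subgroup.closure_induction (p := fun g _ => ∃ π, Pprop X U g π)
      ?_ ⟨1, P_one⟩ ?_ ?_ hg
    · rintro y (rfl | rfl | rfl)
      · exact ⟨c3 0 1 2, hPgm⟩
      · exact ⟨c3 1 2 3, hPg0⟩
      · exact ⟨c3 2 3 4, hPgp⟩
    · rintro y z _ _ ⟨πy, hy⟩ ⟨πz, hz⟩
      exact ⟨πy * πz, P_mul hy hz⟩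
    · rintro y _ ⟨πy, hy⟩
      exact ⟨πy⁻¹, P_inv hdU hy⟩
  have huniq : ∀ {g : ↥X ≃ₜ ↥X} {π π' : Equiv.Perm (Fin 5)},
      Pprop X U g π → Pprop X U g π' → π = π' :=
    fun h1 h2 => P_unique hdU hU.2 hsubl h1 h2
  constructor
  · -- the isomorphism with `Alt(5)`
    choose Φ hΦ using hexP
    let ψ : ↥(Subgroup.closure {gm, g0, gp}) →* Equiv.Perm (Fin 5) :=
      MonoidHom.mk' (fun g => Φ (g : ↥X ≃ₜ ↥X) g.2)
        (by
          intro a b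
          exact huniq (hΦ _ (a * b).2) (P_mul (hΦ _ a.2) (hΦ _ b.2)))
    have hψval : ∀ g : ↥(Subgroup.closure {gm, g0, gp}),
        Pprop X U (g : ↥X ≃ₜ ↥X) (ψ g) := fun g => hΦ _ g.2
    have hinj : Function.Injective ψ := by
      intro a b h
      have ha := hψval a
      have hb := hψval b
      rw [h] at ha
      exact Subtype.ext (P_faithful ha hb)
    have hrange : ψ.range = Subgroup.closure {c3 0 1 2, c3 1 2 3, c3 2 3 4} := by
      rw [MonoidHom.range_eq_map,
        ← Subgroup.closure_closure_coe_preimage (k := ({gm, g0, gp} : Set (↥X ≃ₜ ↥X))),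
        MonoidHom.map_closure]
      congr 1
      ext π
      constructor
      · rintro ⟨g, hgpre, rfl⟩
        have hgpre' : (g : ↥X ≃ₜ ↥X) = gm ∨ (g : ↥X ≃ₜ ↥X) = g0 ∨ (g : ↥X ≃ₜ ↥X) = gp := by
          simpa [Set.mem_insert_iff] using hgpre
        rcases hgpre' with h | h | h
        · have hP := hPgm; rw [← h] at hP
          exact Or.inl (huniq (hψval g) hP)
        · have hP := hPg0; rw [← h] at hP
          exact Or.inr (Or.inl (huniq (hψval g) hP))
        · have hP := hPgp; rw [← h] at hP
          exact Or.inr (Or.inr (huniq (hψval g) hP))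
      · intro hπ
        rcases hπ with rfl | rfl | rfl
        · refine ⟨⟨gm, Subgroup.subset_closure (by simp)⟩, by simp, ?_⟩
          exact huniq (hψval _) hPgm
        · refine ⟨⟨g0, Subgroup.subset_closure (by simp)⟩, by simp, ?_⟩
          exact huniq (hψval _) hPg0
        · refine ⟨⟨gp, Subgroup.subset_closure (by simp)⟩, by simp, ?_⟩
          exact huniq (hψval _) hPgp
    exact ⟨(MonoidHom.ofInjective hinj).trans
      (MulEquiv.subgroupCongr (hrange.trans closure_c3_eq_alternating))⟩
  · -- the support statement
    intro g hg p hne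
    obtain ⟨π, hP⟩ := hexP g hg
    by_contra hcon
    push_neg at hcon
    apply hne
    apply hP.2
    intro i hmem
    exact hcon (lvl i) (hlb i).1 (hlb i).2 hmem
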